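/- Let V be an abelian Lie algebra and 𝔤 = 𝔞 ⋉ V a Lie algebra with 𝔞 a Lie subalgebra of gl(V) acting naturally on V (so 𝔤 is the semidirect product). Then H^0(V, 𝔤) = V, and for every q ≥ 1 there is a vector space isomorphism H^q(V, 𝔤) ≅ ker ∂^q ⊕ Hom(Λ^q V, V)/im ∂^{q−1}, where ∂^q : Hom(Λ^q V, 𝔞) → Hom(Λ^{q+1} V, V) is the Spencer operator defined by (∂^q φ)(v₁ ∧ … ∧ v_{q+1}) = Σ_{i=1}^{q+1} (−1)^i φ(v₁ ∧ … ∧ v̂_i ∧ … ∧ v_{q+1})·v_i. -/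

import Mathlib

set_option maxHeartbeats 1000000


/-- The wedge `v₁ ∧ ⋯ ∧ v_q`, as an element of the `q`-th exterior power. -/
noncomputable def wedge {V : Type} [AddCommGroup V] [Module ℝ V] (q : ℕ)
    (v : Fin q → V) : ⋀[ℝ]^q V :=
  ⟨ExteriorAlgebra.ιMulti ℝ q v, ExteriorAlgebra.ιMulti_range ℝ q (Set.mem_range_self v)⟩

/-- Two linear maps on the `q`-th exterior power agreeing on all wedges are equal. -/
private lemma wedge_ext {V X : Type} [AddCommGroup V] [Module ℝ V]
    [AddCommGroup X] [Module ℝ X] {q : ℕ} {f g : (⋀[ℝ]^q V) →ₗ[ℝ] X}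
    (h : ∀ v : Fin q → V, f (wedge q v) = g (wedge q v)) : f = g := by
  ext v
  exact h v

theorem cohomology_of_abelian_ideal_via_spencer
    (V 𝔞 : Type) [AddCommGroup V] [Module ℝ V] [AddCommGroup 𝔞] [Module ℝ 𝔞]
    (ρ : 𝔞 →ₗ[ℝ] Module.End ℝ V) (hρ : Function.Injective ρ)
    (sp : ∀ q : ℕ, ((⋀[ℝ]^q V) →ₗ[ℝ] 𝔞) →ₗ[ℝ] ((⋀[ℝ]^(q+1) V) →ₗ[ℝ] V))
    (hsp : ∀ (q : ℕ) (φ : (⋀[ℝ]^q V) →ₗ[ℝ] 𝔞) (v : Fin (q+1) → V),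
      sp q φ (wedge (q+1) v) =
        ∑ i : Fin (q+1), ((-1 : ℝ) ^ ((i : ℕ) + 1)) •
          (ρ (φ (wedge q (v ∘ i.succAbove))) (v i)))
    (D : ∀ q : ℕ, ((⋀[ℝ]^q V) →ₗ[ℝ] (𝔞 × V)) →ₗ[ℝ] ((⋀[ℝ]^(q+1) V) →ₗ[ℝ] (𝔞 × V)))
    (hD : ∀ (q : ℕ) (c : (⋀[ℝ]^q V) →ₗ[ℝ] (𝔞 × V)) (v : Fin (q+1) → V),
      D q c (wedge (q+1) v) =
        ∑ i : Fin (q+1), ((-1 : ℝ) ^ ((i : ℕ) + 1)) •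
          (((0 : 𝔞), ρ ((c (wedge q (v ∘ i.succAbove))).1) (v i)) : 𝔞 × V)) :
    -- H^0(V, 𝔤) = V
    Nonempty (↥(LinearMap.ker (D 0)) ≃ₗ[ℝ] V) ∧
    -- H^q(V, 𝔤) ≅ ker ∂^q ⊕ Hom(Λ^q V, V)/im ∂^{q−1} for q ≥ 1
    (∀ q : ℕ, Nonempty
      ((Submodule.map (LinearMap.range (D q)).mkQ (LinearMap.ker (D (q+1))))
        ≃ₗ[ℝ]
       (↥(LinearMap.ker (sp (q+1))) ×
        (((⋀[ℝ]^(q+1) V) →ₗ[ℝ] V) ⧸ LinearMap.range (sp q))))) := by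
  -- The key identity: `D q c = inr ∘ sp q (fst ∘ c)`.
  have Dkey : ∀ (q : ℕ) (c : (⋀[ℝ]^q V) →ₗ[ℝ] (𝔞 × V)),
      D q c = (LinearMap.inr ℝ 𝔞 V) ∘ₗ (sp q ((LinearMap.fst ℝ 𝔞 V) ∘ₗ c)) := by
    intro q c
    apply wedge_ext
    intro v
    rw [hD, LinearMap.comp_apply, hsp, map_sum]
    refine Finset.sum_congr rfl fun i _ => ?_
    rw [map_smul]
    rfl
  -- Characterization of kernels.
  have hker : ∀ (q : ℕ) (c : (⋀[ℝ]^q V) →ₗ[ℝ] (𝔞 × V)),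
      c ∈ LinearMap.ker (D q) ↔ sp q ((LinearMap.fst ℝ 𝔞 V) ∘ₗ c) = 0 := by
    intro q c
    rw [LinearMap.mem_ker, Dkey]
    constructor
    · intro h
      ext w
      have h2 := LinearMap.congr_fun h (exteriorPower.ιMulti ℝ (q+1) w)
      simpa using congrArg Prod.snd h2
    · intro h
      rw [h, LinearMap.comp_zero]
  -- Characterization of ranges.
  have hrange : ∀ (q : ℕ) (c : (⋀[ℝ]^(q+1) V) →ₗ[ℝ] (𝔞 × V)),
      c ∈ LinearMap.range (D q) ↔
        ((LinearMap.fst ℝ 𝔞 V) ∘ₗ c = 0 ∧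
         (LinearMap.snd ℝ 𝔞 V) ∘ₗ c ∈ LinearMap.range (sp q)) := by
    intro q c
    constructor
    · rintro ⟨c', rfl⟩
      rw [Dkey]
      constructor
      · rw [← LinearMap.comp_assoc, LinearMap.fst_comp_inr, LinearMap.zero_comp]
      · rw [← LinearMap.comp_assoc, LinearMap.snd_comp_inr, LinearMap.id_comp]
        exact ⟨_, rfl⟩
    · rintro ⟨h1, a, ha⟩
      refine ⟨LinearMap.prod a 0, ?_⟩
      rw [Dkey, LinearMap.fst_prod, ha]
      ext w
      · simpa using (LinearMap.congr_fun h1 (exteriorPower.ιMulti ℝ (q+1) w)).symm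
      · rfl
  constructor
  · -- the H^0 part
    set w0 : ⋀[ℝ]^0 V := wedge 0 (fun i => i.elim0) with hw0
    have hwedge0 : ∀ v : Fin 0 → V, wedge 0 v = w0 := by
      intro v
      rw [hw0]
      congr 1
      exact funext fun i => i.elim0
    set F0 : ↥(LinearMap.ker (D 0)) →ₗ[ℝ] V :=
      (LinearMap.snd ℝ 𝔞 V) ∘ₗ (LinearMap.applyₗ w0) ∘ₗ (LinearMap.ker (D 0)).subtype
      with hF0
    have hF0app : ∀ x : ↥(LinearMap.ker (D 0)),
        F0 x = ((x : (⋀[ℝ]^0 V) →ₗ[ℝ] (𝔞 × V)) w0).2 := fun _ => rfl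
    refine ⟨LinearEquiv.ofBijective F0 ⟨?_, ?_⟩⟩
    · -- injective
      rw [injective_iff_map_eq_zero]
      rintro ⟨c, hc⟩ h0
      have h2 : (c w0).2 = 0 := h0
      have h1 : (c w0).1 = 0 := by
        apply hρ
        rw [map_zero]
        ext u
        have hs := hsp 0 ((LinearMap.fst ℝ 𝔞 V) ∘ₗ c) (fun _ => u)
        rw [(hker 0 c).mp hc] at hs
        simp only [LinearMap.zero_apply, hwedge0] at hs
        rw [Fin.sum_univ_one] at hs
        simpa [neg_eq_zero] using hs.symm
      have hc0 : c = 0 := by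
        apply wedge_ext (q := 0)
        intro v
        rw [hwedge0, LinearMap.zero_apply]
        exact Prod.ext h1 h2
      exact Subtype.ext hc0
    · -- surjective
      intro x
      set f : (⋀[ℝ]^0 V) →ₗ[ℝ] ℝ :=
        (ExteriorAlgebra.algebraMapInv).toLinearMap ∘ₗ (⋀[ℝ]^0 V).subtype with hfdef
      have hf1 : f w0 = 1 := by
        show ExteriorAlgebra.algebraMapInv (ExteriorAlgebra.ιMulti ℝ 0 (fun i : Fin 0 => i.elim0)) = 1
        rw [ExteriorAlgebra.ιMulti_apply]
        simp
      set c : (⋀[ℝ]^0 V) →ₗ[ℝ] (𝔞 × V) := LinearMap.smulRight f ((0 : 𝔞), x) with hcdef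
      have hcmem : c ∈ LinearMap.ker (D 0) := by
        rw [hker 0 c]
        have : (LinearMap.fst ℝ 𝔞 V) ∘ₗ c = 0 := by
          ext z
          simp [hcdef]
        rw [this, map_zero]
      refine ⟨⟨c, hcmem⟩, ?_⟩
      rw [hF0app]
      show (c w0).2 = x
      simp [hcdef, hf1]
  · -- the H^q part
    intro q
    set K := LinearMap.ker (sp (q+1)) with hK
    set R' := LinearMap.range (sp q) with hR'
    set N := LinearMap.ker (D (q+1)) with hN
    set Rd := LinearMap.range (D q) with hRd
    -- the first component map into ker (sp (q+1))
    have h1mem : ∀ x : ↥N,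
        ((LinearMap.llcomp ℝ (⋀[ℝ]^(q+1) V) (𝔞 × V) 𝔞 (LinearMap.fst ℝ 𝔞 V)) ∘ₗ N.subtype) x
          ∈ K := by
      intro x
      exact (hker (q+1) (x : _)).mp x.2
    set F1 : ↥N →ₗ[ℝ] ↥K := LinearMap.codRestrict K
      ((LinearMap.llcomp ℝ (⋀[ℝ]^(q+1) V) (𝔞 × V) 𝔞 (LinearMap.fst ℝ 𝔞 V)) ∘ₗ N.subtype)
      h1mem with hF1
    set F2 : ↥N →ₗ[ℝ] (((⋀[ℝ]^(q+1) V) →ₗ[ℝ] V) ⧸ R') :=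
      R'.mkQ ∘ₗ (LinearMap.llcomp ℝ (⋀[ℝ]^(q+1) V) (𝔞 × V) V (LinearMap.snd ℝ 𝔞 V)) ∘ₗ
        N.subtype with hF2
    set F : ↥N →ₗ[ℝ] (↥K × (((⋀[ℝ]^(q+1) V) →ₗ[ℝ] V) ⧸ R')) := F1.prod F2 with hF
    set g : ↥N →ₗ[ℝ] ↥(Submodule.map Rd.mkQ N) :=
      LinearMap.codRestrict _ (Rd.mkQ ∘ₗ N.subtype)
        (fun x => Submodule.mem_map_of_mem x.2) with hg
    have hgsurj : Function.Surjective g := by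
      rintro ⟨y, c, hc, rfl⟩
      exact ⟨⟨c, hc⟩, Subtype.ext rfl⟩
    have hFsurj : Function.Surjective F := by
      rintro ⟨⟨a, ha⟩, b⟩
      obtain ⟨b', rfl⟩ := Submodule.mkQ_surjective R' b
      have hcmem : LinearMap.prod a b' ∈ N := by
        rw [hN, hker (q+1)]
        rw [LinearMap.fst_prod]
        exact ha
      refine ⟨⟨LinearMap.prod a b', hcmem⟩, ?_⟩
      refine Prod.ext (Subtype.ext ?_) ?_
      · show ((LinearMap.fst ℝ 𝔞 V) ∘ₗ LinearMap.prod a b') = a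
        exact LinearMap.fst_prod a b'
      · show R'.mkQ ((LinearMap.snd ℝ 𝔞 V) ∘ₗ LinearMap.prod a b') = R'.mkQ b'
        rw [LinearMap.snd_prod]
    have hkereq : LinearMap.ker g = LinearMap.ker F := by
      ext x
      obtain ⟨c, hc⟩ := x
      simp only [LinearMap.mem_ker]
      constructor
      · intro h
        have hcr : c ∈ Rd := by
          have : Rd.mkQ c = 0 := congrArg Subtype.val h
          rwa [Submodule.mkQ_apply, Submodule.Quotient.mk_eq_zero] at this
        obtain ⟨h1, h2⟩ := (hrange q c).mp hcr
        refine Prod.ext (Subtype.ext ?_) ?_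
        · exact h1
        · show R'.mkQ ((LinearMap.snd ℝ 𝔞 V) ∘ₗ c) = 0
          rwa [Submodule.mkQ_apply, Submodule.Quotient.mk_eq_zero]
      · intro h
        have h1 : (LinearMap.fst ℝ 𝔞 V) ∘ₗ c = 0 := congrArg Subtype.val (congrArg Prod.fst h)
        have h2 : R'.mkQ ((LinearMap.snd ℝ 𝔞 V) ∘ₗ c) = 0 := congrArg Prod.snd h
        rw [Submodule.mkQ_apply, Submodule.Quotient.mk_eq_zero] at h2
        have hcr : c ∈ Rd := (hrange q c).mpr ⟨h1, h2⟩
        apply Subtype.ext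
        show Rd.mkQ c = 0
        rwa [Submodule.mkQ_apply, Submodule.Quotient.mk_eq_zero]
    exact ⟨((LinearMap.quotKerEquivOfSurjective (M := ↥N) g hgsurj).symm.trans
      (Submodule.quotEquivOfEq _ _ hkereq)).symm.symm.trans
      (LinearMap.quotKerEquivOfSurjective (M := ↥N) F hFsurj)⟩
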